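/- arXiv:2206.12701 — 4 statements merged into one kernel-verified Lean document; each statement's English description precedes it below -/
import Mathlib

section
/- Under the bandwagon rating process, the variance of the sample mean satisfies the recursion Var[p̄_n] = ((n-1)(n+1-2λ_n)/n²) · Var[p̄_{n-1}] + p(1-p)/n², with Var[p̄_1] = p(1-p). -/
open MeasureTheory ProbabilityTheory Finset Filter

/-- Sample mean of the first `n` ratings (ratings are indexed from 1). -/
noncomputable def pbar {Ω : Type*} (r : ℕ → Ω → ℝ) (n : ℕ) (ω : Ω) : ℝ :=
  (∑ i ∈ Finset.Icc 1 n, r i ω) / n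

/-- σ-algebra generated by the first `n` ratings. -/
def ratingsAlg {Ω : Type*} (r : ℕ → Ω → ℝ) (n : ℕ) : MeasurableSpace Ω :=
  ⨆ i ∈ Finset.Icc 1 n, MeasurableSpace.comap (r i) (inferInstance : MeasurableSpace ℝ)

/-- The bandwagon rating process of Xie et al., as used in the paper. -/
structure Bandwagon {Ω : Type*} [MeasurableSpace Ω] (μ : Measure Ω)
    (p : ℝ) (lam : ℕ → ℝ) (r : ℕ → Ω → ℝ) : Prop where
  prob : IsProbabilityMeasure μ
  hp : 0 < p ∧ p < 1
  hlam1 : lam 1 = 1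
  hlam_nonneg : ∀ n, 1 ≤ n → 0 ≤ lam n
  hlam_mono : ∀ n, 2 ≤ n → lam n ≤ lam (n - 1)
  hmeas : ∀ n, Measurable (r n)
  hbin : ∀ n, 1 ≤ n → ∀ ω, r n ω = 0 ∨ r n ω = 1
  hfirst : ∫ ω, r 1 ω ∂μ = p
  hcond : ∀ n, 2 ≤ n →
    μ[r n | ratingsAlg r (n - 1)] =ᵐ[μ]
      fun ω => lam n * p + (1 - lam n) * pbar r (n - 1) ω

/-- Affine-corrected rating `r̂ᵢ`. -/
noncomputable def rhat {Ω : Type*} (r : ℕ → Ω → ℝ) (lam : ℕ → ℝ) (i : ℕ) (ω : Ω) : ℝ :=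
  (r i ω - (1 - lam i) * pbar r (i - 1) ω) / lam i

section Aux

variable {Ω : Type*} [MeasurableSpace Ω] {μ : Measure Ω} {p : ℝ} {lam : ℕ → ℝ} {r : ℕ → Ω → ℝ}

lemma bw_r_bdd (hbw : Bandwagon μ p lam r) {i : ℕ} (hi : 1 ≤ i) (ω : Ω) :
    0 ≤ r i ω ∧ r i ω ≤ 1 := by
  rcases hbw.hbin i hi ω with h | h <;> simp [h]

lemma bw_r_sq (hbw : Bandwagon μ p lam r) {i : ℕ} (hi : 1 ≤ i) (ω : Ω) :
    r i ω * r i ω = r i ω := by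
  rcases hbw.hbin i hi ω with h | h <;> simp [h]

lemma bw_pbar_bdd (hbw : Bandwagon μ p lam r) (n : ℕ) (ω : Ω) :
    0 ≤ pbar r n ω ∧ pbar r n ω ≤ 1 := by
  unfold pbar
  rcases Nat.eq_zero_or_pos n with h | h
  · simp [h]
  · have hn : (0:ℝ) < n := by exact_mod_cast h
    constructor
    · exact div_nonneg (Finset.sum_nonneg fun i hi =>
        (bw_r_bdd hbw (Finset.mem_Icc.mp hi).1 ω).1) hn.le
    · rw [div_le_one hn]
      calc ∑ i ∈ Finset.Icc 1 n, r i ω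
          ≤ ∑ _i ∈ Finset.Icc 1 n, (1:ℝ) :=
            Finset.sum_le_sum fun i hi => (bw_r_bdd hbw (Finset.mem_Icc.mp hi).1 ω).2
        _ = n := by simp

lemma bw_pbar_meas (hbw : Bandwagon μ p lam r) (n : ℕ) : Measurable (pbar r n) := by
  unfold pbar
  exact (Finset.measurable_sum _ fun i _ => hbw.hmeas i).div_const _

lemma bw_alg_le (hbw : Bandwagon μ p lam r) (n : ℕ) :
    ratingsAlg r n ≤ ‹MeasurableSpace Ω› :=
  iSup₂_le fun i _ => (hbw.hmeas i).comap_le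

lemma bw_pbar_smeas (r : ℕ → Ω → ℝ) (n : ℕ) :
    StronglyMeasurable[ratingsAlg r n] (pbar r n) := by
  have hm : ∀ i ∈ Finset.Icc 1 n, Measurable[ratingsAlg r n] (r i) := by
    intro i hi s hs
    have hle : MeasurableSpace.comap (r i) (inferInstance : MeasurableSpace ℝ)
        ≤ ratingsAlg r n := le_iSup₂ (f := fun i _ =>
          MeasurableSpace.comap (r i) (inferInstance : MeasurableSpace ℝ)) i hi
    exact hle _ ⟨s, hs, rfl⟩
  have : Measurable[ratingsAlg r n] (pbar r n) := by
    unfold pbar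
    exact (Finset.measurable_sum _ hm).div_const _
  exact this.stronglyMeasurable

lemma bw_int (hbw : Bandwagon μ p lam r) {f : Ω → ℝ} (hf : Measurable f) (C : ℝ)
    (h : ∀ ω, ‖f ω‖ ≤ C) : Integrable f μ := by
  haveI := hbw.prob
  exact (integrable_const C).mono' hf.aestronglyMeasurable (ae_of_all _ h)

lemma bw_int_r (hbw : Bandwagon μ p lam r) {i : ℕ} (hi : 1 ≤ i) : Integrable (r i) μ :=
  bw_int hbw (hbw.hmeas i) 1 fun ω => by
    rcases bw_r_bdd hbw hi ω with ⟨h0, h1⟩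
    rw [Real.norm_eq_abs, abs_le]; constructor <;> linarith

lemma bw_int_pbar (hbw : Bandwagon μ p lam r) (n : ℕ) : Integrable (pbar r n) μ :=
  bw_int hbw (bw_pbar_meas hbw n) 1 fun ω => by
    rcases bw_pbar_bdd hbw n ω with ⟨h0, h1⟩
    rw [Real.norm_eq_abs, abs_le]; constructor <;> linarith

lemma bw_int_pbar_sq (hbw : Bandwagon μ p lam r) (n : ℕ) :
    Integrable (fun ω => pbar r n ω ^ 2) μ :=
  bw_int hbw ((bw_pbar_meas hbw n).pow_const 2) 1 fun ω => by
    rcases bw_pbar_bdd hbw n ω with ⟨h0, h1⟩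
    rw [Real.norm_eq_abs, abs_le]; constructor <;> nlinarith

lemma bw_int_cross (hbw : Bandwagon μ p lam r) (m : ℕ) {i : ℕ} (hi : 1 ≤ i) :
    Integrable (fun ω => pbar r m ω * r i ω) μ :=
  bw_int hbw ((bw_pbar_meas hbw m).mul (hbw.hmeas i)) 1 fun ω => by
    rcases bw_pbar_bdd hbw m ω with ⟨h0, h1⟩
    rcases bw_r_bdd hbw hi ω with ⟨h2, h3⟩
    rw [Real.norm_eq_abs, abs_le]; constructor <;> nlinarith

lemma bw_pbar_mean_aux (hbw : Bandwagon μ p lam r) {m : ℕ} (hm : 1 ≤ m)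
    (h : ∀ j, 1 ≤ j → j ≤ m → ∫ ω, r j ω ∂μ = p) :
    ∫ ω, pbar r m ω ∂μ = p := by
  unfold pbar
  rw [integral_div, integral_finset_sum _ fun j hj => bw_int_r hbw (Finset.mem_Icc.mp hj).1]
  rw [Finset.sum_congr rfl fun j hj => h j (Finset.mem_Icc.mp hj).1 (Finset.mem_Icc.mp hj).2]
  have hm0 : (m:ℝ) ≠ 0 := by positivity
  simp [Finset.sum_const, Nat.card_Icc]
  field_simp

lemma bw_mean_r (hbw : Bandwagon μ p lam r) : ∀ i, 1 ≤ i → ∫ ω, r i ω ∂μ = p := by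
  haveI := hbw.prob
  intro i
  induction i using Nat.strong_induction_on with
  | _ i ih =>
    intro hi
    rcases eq_or_lt_of_le hi with h1 | h2
    · rw [← h1]; exact hbw.hfirst
    · have h2' : 2 ≤ i := h2
      have hm1 : 1 ≤ i - 1 := by omega
      have hle := bw_alg_le hbw (i - 1)
      have hpm : ∫ ω, pbar r (i-1) ω ∂μ = p :=
        bw_pbar_mean_aux hbw hm1 fun j hj hjm => ih j (by omega) hj
      calc ∫ ω, r i ω ∂μ = ∫ ω, (μ[r i | ratingsAlg r (i-1)]) ω ∂μ :=
            (integral_condExp hle).symm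
        _ = ∫ ω, (lam i * p + (1 - lam i) * pbar r (i-1) ω) ∂μ :=
            integral_congr_ae (hbw.hcond i h2')
        _ = lam i * p + (1 - lam i) * ∫ ω, pbar r (i-1) ω ∂μ := by
            rw [integral_add (integrable_const _)
              ((bw_int_pbar hbw (i-1)).const_mul _), integral_const,
              integral_const_mul]
            simp
        _ = p := by rw [hpm]; ring

lemma bw_mean_pbar (hbw : Bandwagon μ p lam r) {n : ℕ} (hn : 1 ≤ n) :
    ∫ ω, pbar r n ω ∂μ = p :=
  bw_pbar_mean_aux hbw hn fun j hj _ => bw_mean_r hbw j hj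

lemma bw_cross (hbw : Bandwagon μ p lam r) {n : ℕ} (hn : 2 ≤ n) :
    ∫ ω, pbar r (n-1) ω * r n ω ∂μ
      = lam n * p * p + (1 - lam n) * ∫ ω, pbar r (n-1) ω ^ 2 ∂μ := by
  haveI := hbw.prob
  have hn1 : 1 ≤ n := by omega
  have hm1 : 1 ≤ n - 1 := by omega
  have hle := bw_alg_le hbw (n - 1)
  have hsm := bw_pbar_smeas r (n - 1)
  have hpull : μ[pbar r (n-1) * r n | ratingsAlg r (n-1)]
      =ᵐ[μ] pbar r (n-1) * μ[r n | ratingsAlg r (n-1)] :=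
    condExp_stronglyMeasurable_mul_of_bound hle hsm (bw_int_r hbw hn1) 1
      (ae_of_all _ fun ω => by
        rcases bw_pbar_bdd hbw (n-1) ω with ⟨h0, h1⟩
        rw [Real.norm_eq_abs, abs_le]; constructor <;> linarith)
  have hfull : μ[pbar r (n-1) * r n | ratingsAlg r (n-1)]
      =ᵐ[μ] fun ω => pbar r (n-1) ω * (lam n * p + (1 - lam n) * pbar r (n-1) ω) :=
    hpull.trans ((EventuallyEq.refl _ (pbar r (n-1))).mul (hbw.hcond n hn))
  calc ∫ ω, pbar r (n-1) ω * r n ω ∂μ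
      = ∫ ω, (μ[pbar r (n-1) * r n | ratingsAlg r (n-1)]) ω ∂μ :=
        (integral_condExp hle).symm
    _ = ∫ ω, pbar r (n-1) ω * (lam n * p + (1 - lam n) * pbar r (n-1) ω) ∂μ :=
        integral_congr_ae hfull
    _ = ∫ ω, (lam n * p * pbar r (n-1) ω + (1 - lam n) * pbar r (n-1) ω ^ 2) ∂μ := by
        congr 1; funext ω; ring
    _ = lam n * p * ∫ ω, pbar r (n-1) ω ∂μ
          + (1 - lam n) * ∫ ω, pbar r (n-1) ω ^ 2 ∂μ := by
        rw [integral_add ((bw_int_pbar hbw (n-1)).const_mul _)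
          ((bw_int_pbar_sq hbw (n-1)).const_mul _), integral_const_mul,
          integral_const_mul]
    _ = lam n * p * p + (1 - lam n) * ∫ ω, pbar r (n-1) ω ^ 2 ∂μ := by
        rw [bw_mean_pbar hbw hm1]

lemma bw_pbar_rec (hbw : Bandwagon μ p lam r) {n : ℕ} (hn : 2 ≤ n) (ω : Ω) :
    pbar r n ω = (((n:ℝ) - 1) * pbar r (n-1) ω + r n ω) / n := by
  have hm1 : 1 ≤ n - 1 := by omega
  have hmr : ((n - 1 : ℕ) : ℝ) = (n:ℝ) - 1 := by
    rw [Nat.cast_sub (by omega)]; simp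
  have hm0 : ((n-1 : ℕ):ℝ) ≠ 0 := by
    rw [hmr]; have : (2:ℝ) ≤ n := by exact_mod_cast hn
    linarith
  have hsum : ∑ i ∈ Finset.Icc 1 n, r i ω
      = ∑ i ∈ Finset.Icc 1 (n-1), r i ω + r n ω := by
    have h : Finset.Icc 1 n = insert n (Finset.Icc 1 (n-1)) := by
      have := Finset.insert_Icc_right_eq_Icc_add_one (a := 1) (b := n - 1) (by omega)
      rw [Nat.sub_add_cancel (by omega)] at this
      exact this.symm
    rw [h, Finset.sum_insert (by simp [Finset.mem_Icc]; omega)]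
    ring
  have hn0 : (n:ℝ) ≠ 0 := by positivity
  have hm0' : (n:ℝ) - 1 ≠ 0 := by rw [← hmr]; exact hm0
  unfold pbar
  rw [hsum, hmr]
  field_simp

lemma bw_sq_mean (hbw : Bandwagon μ p lam r) {n : ℕ} (hn : 2 ≤ n) :
    ∫ ω, pbar r n ω ^ 2 ∂μ
      = (((n:ℝ) - 1) ^ 2 * ∫ ω, pbar r (n-1) ω ^ 2 ∂μ
          + 2 * ((n:ℝ) - 1) * ∫ ω, pbar r (n-1) ω * r n ω ∂μ + p) / (n:ℝ) ^ 2 := by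
  have hn1 : 1 ≤ n := by omega
  have hpt : ∀ ω, pbar r n ω ^ 2
      = (((n:ℝ) - 1) ^ 2 * pbar r (n-1) ω ^ 2
          + 2 * ((n:ℝ) - 1) * (pbar r (n-1) ω * r n ω) + r n ω) / (n:ℝ) ^ 2 := by
    intro ω
    rw [bw_pbar_rec hbw hn ω]
    linear_combination (bw_r_sq hbw hn1 ω) / (n:ℝ) ^ 2
  have hA : Integrable (fun a => ((n:ℝ) - 1) ^ 2 * pbar r (n-1) a ^ 2) μ :=
    (bw_int_pbar_sq hbw (n-1)).const_mul _
  have hB : Integrable (fun a => 2 * ((n:ℝ) - 1) * (pbar r (n-1) a * r n a)) μ :=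
    (bw_int_cross hbw (n-1) hn1).const_mul _
  have hAB : Integrable (fun a => ((n:ℝ) - 1) ^ 2 * pbar r (n-1) a ^ 2
      + 2 * ((n:ℝ) - 1) * (pbar r (n-1) a * r n a)) μ := hA.add hB
  rw [integral_congr_ae (ae_of_all _ hpt), integral_div,
    integral_add hAB (bw_int_r hbw hn1), integral_add hA hB,
    integral_const_mul, integral_const_mul, bw_mean_r hbw n hn1]

lemma bw_memLp (hbw : Bandwagon μ p lam r) (n : ℕ) : MemLp (pbar r n) 2 μ := by
  haveI := hbw.prob
  refine MemLp.of_bound (bw_pbar_meas hbw n).aestronglyMeasurable 1 (ae_of_all _ fun ω => ?_)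
  rcases bw_pbar_bdd hbw n ω with ⟨h0, h1⟩
  rw [Real.norm_eq_abs, abs_le]; constructor <;> linarith

lemma bw_variance (hbw : Bandwagon μ p lam r) {n : ℕ} (hn : 1 ≤ n) :
    variance (pbar r n) μ = (∫ ω, pbar r n ω ^ 2 ∂μ) - p ^ 2 := by
  haveI := hbw.prob
  rw [variance_eq_sub (bw_memLp hbw n)]
  have h1 : μ[(pbar r n) ^ 2] = ∫ ω, pbar r n ω ^ 2 ∂μ := by
    apply integral_congr_ae; filter_upwards with ω; simp
  have h2 : μ[pbar r n] = p := bw_mean_pbar hbw hn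
  rw [h1, h2]

end Aux

theorem bandwagon_variance_recursion {Ω : Type*} [MeasurableSpace Ω] (μ : MeasureTheory.Measure Ω)
    (p : ℝ) (lam : ℕ → ℝ) (r : ℕ → Ω → ℝ)
    (hbw : Bandwagon μ p lam r) :
    variance (pbar r 1) μ = p * (1 - p) ∧
    ∀ n, 2 ≤ n →
      variance (pbar r n) μ
        = ((n : ℝ) - 1) * ((n : ℝ) + 1 - 2 * lam n) / (n : ℝ) ^ 2
            * variance (pbar r (n - 1)) μ
          + p * (1 - p) / (n : ℝ) ^ 2 := by
  constructor
  · rw [bw_variance hbw le_rfl]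
    have h1 : ∫ ω, pbar r 1 ω ^ 2 ∂μ = p := by
      have hpt : ∀ ω, pbar r 1 ω ^ 2 = r 1 ω := by
        intro ω
        have : pbar r 1 ω = r 1 ω := by simp [pbar]
        rw [this, pow_two, bw_r_sq hbw le_rfl ω]
      rw [integral_congr_ae (ae_of_all _ hpt), hbw.hfirst]
    rw [h1]; ring
  · intro n hn
    have hm1 : 1 ≤ n - 1 := by omega
    have hn0 : (n:ℝ) ≠ 0 := by positivity
    rw [bw_variance hbw (by omega), bw_variance hbw hm1, bw_sq_mean hbw hn,
      bw_cross hbw hn]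
    field_simp
    ring
end

section
/- If Σ_{i=1}^{∞} λ_i² < ∞ (e.g., λ_n = 1/n), then the sample mean under the bandwagon rating process is not a consistent estimator of p. -/
open MeasureTheory ProbabilityTheory Finset Filter
set_option linter.unusedSectionVars false

section aux
variable {Ω : Type*} [MeasurableSpace Ω] {μ : Measure Ω} {p : ℝ} {lam : ℕ → ℝ} {r : ℕ → Ω → ℝ}

lemma BW.pbar_nonneg (hb : ∀ i, 1 ≤ i → ∀ ω, r i ω = 0 ∨ r i ω = 1) (n : ℕ) (ω : Ω) :
    0 ≤ pbar r n ω := by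
  unfold pbar
  apply div_nonneg _ (Nat.cast_nonneg n)
  exact Finset.sum_nonneg fun i hi => by
    rcases hb i (Finset.mem_Icc.mp hi).1 ω with h | h <;> simp [h]

lemma BW.pbar_le_one (hb : ∀ i, 1 ≤ i → ∀ ω, r i ω = 0 ∨ r i ω = 1) (n : ℕ) (ω : Ω) :
    pbar r n ω ≤ 1 := by
  unfold pbar
  rcases Nat.eq_zero_or_pos n with h | h
  · simp [h]
  · rw [div_le_one (by exact_mod_cast h)]
    calc ∑ i ∈ Finset.Icc 1 n, r i ω ≤ ∑ i ∈ Finset.Icc 1 n, 1 := by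
          refine Finset.sum_le_sum fun i hi => ?_
          rcases hb i (Finset.mem_Icc.mp hi).1 ω with h | h <;> simp [h]
      _ = n := by simp [Nat.card_Icc]

lemma BW.pbar_meas (hm : ∀ i, Measurable (r i)) (n : ℕ) : Measurable (pbar r n) := by
  unfold pbar
  exact (Finset.measurable_sum _ fun i _ => hm i).div_const _

lemma BW.ratingsAlg_le (hm : ∀ i, Measurable (r i)) (n : ℕ) :
    ratingsAlg r n ≤ (inferInstance : MeasurableSpace Ω) :=
  iSup₂_le fun i _ => (hm i).comap_le

lemma BW.r_meas_alg {n i : ℕ} (hi : i ∈ Finset.Icc 1 n) :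
    Measurable[ratingsAlg r n] (r i) := by
  have : MeasurableSpace.comap (r i) inferInstance ≤ ratingsAlg r n :=
    le_iSup₂ (f := fun j (_ : j ∈ Finset.Icc 1 n) => MeasurableSpace.comap (r j) inferInstance) i hi
  exact fun s hs => this _ (MeasurableSpace.measurableSet_comap.mpr ⟨s, hs, rfl⟩)

lemma BW.pbar_meas_alg {n m : ℕ} (hnm : n ≤ m) : Measurable[ratingsAlg r m] (pbar r n) := by
  unfold pbar
  refine Measurable.div_const (Finset.measurable_sum _ fun i hi => ?_) _
  exact BW.r_meas_alg (Finset.mem_Icc.mpr ⟨(Finset.mem_Icc.mp hi).1, le_trans (Finset.mem_Icc.mp hi).2 hnm⟩)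

lemma BW.integrable_of_bound [IsFiniteMeasure μ] {f : Ω → ℝ} (hf : Measurable f) (K : ℝ)
    (h : ∀ ω, |f ω| ≤ K) : Integrable f μ :=
  (integrable_const K).mono' hf.aestronglyMeasurable (ae_of_all _ h)

lemma BW.pbar_succ (m : ℕ) (hm : 1 ≤ m) (ω : Ω) :
    pbar r (m + 1) ω = ((m : ℝ) * pbar r m ω + r (m + 1) ω) / (m + 1) := by
  unfold pbar
  rw [Finset.sum_Icc_succ_top (by omega : 1 ≤ m + 1)]
  have hm0 : (m : ℝ) ≠ 0 := Nat.cast_ne_zero.mpr (by omega)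
  push_cast
  field_simp

end aux

section aux2
variable {Ω : Type*} [MeasurableSpace Ω] {μ : Measure Ω} {p : ℝ} {lam : ℕ → ℝ} {r : ℕ → Ω → ℝ}

lemma BW.condexp_step [IsFiniteMeasure μ]
    (hmeas : ∀ n, Measurable (r n)) (hbin : ∀ n, 1 ≤ n → ∀ ω, r n ω = 0 ∨ r n ω = 1)
    (m : ℕ) (hm1 : 1 ≤ m)
    (hcnd : μ[r (m + 1) | ratingsAlg r m] =ᵐ[μ]
      fun ω => lam (m + 1) * p + (1 - lam (m + 1)) * pbar r m ω) :
    μ[(fun ω => pbar r (m + 1) ω - p) | ratingsAlg r m] =ᵐ[μ]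
      fun ω => (((m : ℝ) + 1 - lam (m + 1)) / ((m : ℝ) + 1)) * (pbar r m ω - p) := by
  have hF : ratingsAlg r m ≤ (inferInstance : MeasurableSpace Ω) := BW.ratingsAlg_le hmeas m
  set c : ℝ := (m : ℝ) + 1 with hc
  have hc0 : c ≠ 0 := by positivity
  set L : ℝ := lam (m + 1) with hL
  set g1 : Ω → ℝ := fun ω => ((m : ℝ) / c) * pbar r m ω with hg1
  set g2 : Ω → ℝ := fun ω => (1 / c) * r (m + 1) ω with hg2
  have hrbd : ∀ ω, |r (m + 1) ω| ≤ 1 := fun ω => by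
    rcases hbin (m + 1) (by omega) ω with h | h <;> simp [h]
  have hpbd : ∀ ω, |pbar r m ω| ≤ 1 := fun ω =>
    abs_le.mpr ⟨by linarith [BW.pbar_nonneg hbin m ω], BW.pbar_le_one hbin m ω⟩
  have hint1 : Integrable g1 μ := by
    refine BW.integrable_of_bound ((BW.pbar_meas hmeas m).const_mul _) (|(m : ℝ) / c|) fun ω => ?_
    rw [hg1, abs_mul]
    calc |(m : ℝ) / c| * |pbar r m ω| ≤ |(m : ℝ) / c| * 1 :=
          mul_le_mul_of_nonneg_left (hpbd ω) (abs_nonneg _)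
      _ = |(m : ℝ) / c| := mul_one _
  have hint2 : Integrable g2 μ := by
    refine BW.integrable_of_bound ((hmeas (m + 1)).const_mul _) (|1 / c|) fun ω => ?_
    rw [hg2, abs_mul]
    calc |1 / c| * |r (m + 1) ω| ≤ |1 / c| * 1 :=
          mul_le_mul_of_nonneg_left (hrbd ω) (abs_nonneg _)
      _ = |1 / c| := mul_one _
  have heq : (fun ω => pbar r (m + 1) ω - p) = g1 + g2 + fun _ => (-p : ℝ) := by
    funext ω
    simp only [Pi.add_apply, hg1, hg2]
    rw [BW.pbar_succ m hm1 ω]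
    push_cast
    field_simp
    rw [hc]
    ring
  rw [heq]
  have h1 : μ[g1 + g2 + (fun _ => (-p : ℝ)) | ratingsAlg r m] =ᵐ[μ]
      μ[g1 + g2 | ratingsAlg r m] + μ[(fun _ => (-p : ℝ)) | ratingsAlg r m] :=
    condExp_add (hint1.add hint2) (integrable_const _) _
  have h2 : μ[g1 + g2 | ratingsAlg r m] =ᵐ[μ]
      μ[g1 | ratingsAlg r m] + μ[g2 | ratingsAlg r m] := condExp_add hint1 hint2 _
  have h3 : μ[g1 | ratingsAlg r m] = g1 :=
    condExp_of_stronglyMeasurable hF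
      (((BW.pbar_meas_alg (le_refl m)).const_mul _).stronglyMeasurable) hint1
  have h4 : μ[g2 | ratingsAlg r m] =ᵐ[μ] fun ω => (1 / c) * (L * p + (1 - L) * pbar r m ω) := by
    have hsmul : g2 = (1 / c) • r (m + 1) := by funext ω; simp [hg2]
    rw [hsmul]
    refine (condExp_smul (1 / c) (r (m + 1)) _).trans ?_
    filter_upwards [hcnd] with ω hω
    simp [hω]
  have h5 : μ[(fun _ => (-p : ℝ)) | ratingsAlg r m] = fun _ => (-p : ℝ) := condExp_const hF _
  refine h1.trans ?_
  rw [h5]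
  refine (EventuallyEq.add h2 (EventuallyEq.refl _ _)).trans ?_
  rw [h3]
  refine (EventuallyEq.add (EventuallyEq.add (EventuallyEq.refl _ g1) h4)
    (EventuallyEq.refl _ _)).trans ?_
  refine Filter.Eventually.of_forall fun ω => ?_
  simp only [Pi.add_apply, hg1]
  field_simp
  ring


lemma BW.moment_step [IsFiniteMeasure μ]
    (hmeas : ∀ n, Measurable (r n)) (hbin : ∀ n, 1 ≤ n → ∀ ω, r n ω = 0 ∨ r n ω = 1)
    (m : ℕ) (hm1 : 1 ≤ m)
    (hcnd : μ[r (m + 1) | ratingsAlg r m] =ᵐ[μ]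
      fun ω => lam (m + 1) * p + (1 - lam (m + 1)) * pbar r m ω) :
    (((m : ℝ) + 1 - lam (m + 1)) / ((m : ℝ) + 1)) ^ 2 * ∫ ω, (pbar r m ω - p) ^ 2 ∂μ ≤
      ∫ ω, (pbar r (m + 1) ω - p) ^ 2 ∂μ := by
  have hF : ratingsAlg r m ≤ (inferInstance : MeasurableSpace Ω) := BW.ratingsAlg_le hmeas m
  set a : ℝ := ((m : ℝ) + 1 - lam (m + 1)) / ((m : ℝ) + 1) with ha
  set D0 : Ω → ℝ := fun ω => pbar r m ω - p with hD0
  set D1 : Ω → ℝ := fun ω => pbar r (m + 1) ω - p with hD1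
  have hD0m : Measurable D0 := (BW.pbar_meas hmeas m).sub measurable_const
  have hD1m : Measurable D1 := (BW.pbar_meas hmeas (m + 1)).sub measurable_const
  have hD0bd : ∀ ω, |D0 ω| ≤ 1 + |p| := fun ω => by
    have h1 := BW.pbar_nonneg hbin m ω
    have h2 := BW.pbar_le_one hbin m ω
    rw [hD0]
    calc |pbar r m ω - p| ≤ |pbar r m ω| + |p| := abs_sub _ _
      _ ≤ 1 + |p| := by
          have : |pbar r m ω| ≤ 1 := abs_le.mpr ⟨by linarith, h2⟩
          linarith
  have hD1bd : ∀ ω, |D1 ω| ≤ 1 + |p| := fun ω => by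
    have h1 := BW.pbar_nonneg hbin (m + 1) ω
    have h2 := BW.pbar_le_one hbin (m + 1) ω
    rw [hD1]
    calc |pbar r (m + 1) ω - p| ≤ |pbar r (m + 1) ω| + |p| := abs_sub _ _
      _ ≤ 1 + |p| := by
          have : |pbar r (m + 1) ω| ≤ 1 := abs_le.mpr ⟨by linarith, h2⟩
          linarith
  have hK : (0:ℝ) ≤ 1 + |p| := by positivity
  have hintD0 : Integrable D0 μ := BW.integrable_of_bound hD0m _ hD0bd
  have hintD1 : Integrable D1 μ := BW.integrable_of_bound hD1m _ hD1bd
  have hint01 : Integrable (fun ω => D0 ω * D1 ω) μ := by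
    refine BW.integrable_of_bound (hD0m.mul hD1m) ((1 + |p|) * (1 + |p|)) fun ω => ?_
    rw [abs_mul]
    exact mul_le_mul (hD0bd ω) (hD1bd ω) (abs_nonneg _) hK
  have hintD0sq : Integrable (fun ω => D0 ω ^ 2) μ := by
    refine BW.integrable_of_bound (hD0m.pow_const 2) ((1 + |p|) ^ 2) fun ω => ?_
    rw [abs_pow]
    exact pow_le_pow_left₀ (abs_nonneg _) (hD0bd ω) 2
  have hintD1sq : Integrable (fun ω => D1 ω ^ 2) μ := by
    refine BW.integrable_of_bound (hD1m.pow_const 2) ((1 + |p|) ^ 2) fun ω => ?_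
    rw [abs_pow]
    exact pow_le_pow_left₀ (abs_nonneg _) (hD1bd ω) 2
  have hcd : μ[D1 | ratingsAlg r m] =ᵐ[μ] fun ω => a * D0 ω :=
    BW.condexp_step hmeas hbin m hm1 hcnd
  have hD0sm : StronglyMeasurable[ratingsAlg r m] D0 :=
    ((BW.pbar_meas_alg (le_refl m)).sub measurable_const).stronglyMeasurable
  have hpull : μ[D0 * D1 | ratingsAlg r m] =ᵐ[μ] D0 * μ[D1 | ratingsAlg r m] :=
    condExp_mul_of_stronglyMeasurable_left hD0sm (by exact hint01) hintD1
  have hcross : ∫ ω, D0 ω * D1 ω ∂μ = a * ∫ ω, D0 ω ^ 2 ∂μ := by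
    have h1 : ∫ ω, D0 ω * D1 ω ∂μ = ∫ ω, (μ[D0 * D1 | ratingsAlg r m]) ω ∂μ :=
      (integral_condExp (f := D0 * D1) hF).symm
    have h2 : μ[D0 * D1 | ratingsAlg r m] =ᵐ[μ] fun ω => a * D0 ω ^ 2 := by
      refine hpull.trans ?_
      filter_upwards [hcd] with ω hω
      rw [Pi.mul_apply, hω]
      ring
    rw [h1, integral_congr_ae h2, integral_const_mul]
  have hexp : ∫ ω, (D1 ω - a * D0 ω) ^ 2 ∂μ =
      (∫ ω, D1 ω ^ 2 ∂μ) - 2 * a * ∫ ω, D0 ω * D1 ω ∂μ + a ^ 2 * ∫ ω, D0 ω ^ 2 ∂μ := by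
    have : (fun ω => (D1 ω - a * D0 ω) ^ 2) =
        fun ω => (D1 ω ^ 2 - 2 * a * (D0 ω * D1 ω)) + a ^ 2 * D0 ω ^ 2 := by
      funext ω; ring
    have hA : Integrable (fun ω => D1 ω ^ 2 - 2 * a * (D0 ω * D1 ω)) μ :=
      hintD1sq.sub (hint01.const_mul (2 * a))
    have hB : Integrable (fun ω => a ^ 2 * D0 ω ^ 2) μ := hintD0sq.const_mul _
    rw [this, integral_add hA hB, integral_sub hintD1sq (hint01.const_mul (2 * a)),
      integral_const_mul, integral_const_mul]
  have hnn : (0:ℝ) ≤ ∫ ω, (D1 ω - a * D0 ω) ^ 2 ∂μ := integral_nonneg fun ω => sq_nonneg _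
  rw [hexp, hcross] at hnn
  nlinarith [hnn]


lemma BW.base [IsProbabilityMeasure μ]
    (hmeas : ∀ n, Measurable (r n)) (hbin : ∀ n, 1 ≤ n → ∀ ω, r n ω = 0 ∨ r n ω = 1)
    (hfirst : ∫ ω, r 1 ω ∂μ = p) :
    ∫ ω, (pbar r 1 ω - p) ^ 2 ∂μ = p * (1 - p) := by
  have hpb : ∀ ω, pbar r 1 ω = r 1 ω := fun ω => by unfold pbar; simp
  have hptw : (fun ω => (pbar r 1 ω - p) ^ 2) =
      fun ω => (1 - 2 * p) * r 1 ω + p ^ 2 := by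
    funext ω
    rw [hpb ω]
    rcases hbin 1 le_rfl ω with h | h <;> rw [h] <;> ring
  have hint : Integrable (r 1) μ :=
    BW.integrable_of_bound (hmeas 1) 1 fun ω => by
      rcases hbin 1 le_rfl ω with h | h <;> simp [h]
  rw [hptw, integral_add (hint.const_mul _) (integrable_const _), integral_const_mul,
    integral_const, hfirst]
  simp
  ring

lemma BW.sum_inv_sq_le (m : ℕ) (hm : 1 ≤ m) :
    ∑ k ∈ Finset.Icc 2 m, (1 / (k : ℝ)) ^ 2 ≤ 1 - 1 / (m : ℝ) := by
  induction m, hm using Nat.le_induction with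
  | base => simp
  | succ n hn ih =>
    rw [Finset.sum_Icc_succ_top (by omega : 2 ≤ n + 1)]
    have h1 : (0:ℝ) < n := by exact_mod_cast hn
    have h2 : (0:ℝ) < (n:ℝ) + 1 := by linarith
    have key : (1 / ((n:ℝ) + 1)) ^ 2 ≤ 1 / n - 1 / ((n:ℝ) + 1) := by
      rw [div_sub_div _ _ (ne_of_gt h1) (ne_of_gt h2)]
      rw [div_pow, one_pow, div_le_div_iff₀ (by positivity) (by positivity)]
      ring_nf
      nlinarith
    push_cast
    linarith

lemma BW.lam_le_one (hlam1 : lam 1 = 1) (hmono : ∀ n, 2 ≤ n → lam n ≤ lam (n - 1)) :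
    ∀ n, 1 ≤ n → lam n ≤ 1 := by
  intro n hn
  induction n, hn using Nat.le_induction with
  | base => rw [hlam1]
  | succ k hk ih =>
    have := hmono (k + 1) (by omega)
    simpa using le_trans this ih

lemma BW.sum_ratio_le {C : ℝ} (hlam1 : lam 1 = 1)
    (hlam_nonneg : ∀ n, 1 ≤ n → 0 ≤ lam n)
    (hsum : ∀ n, ∑ i ∈ Finset.Icc 1 n, (lam i) ^ 2 ≤ C) (m : ℕ) :
    ∑ k ∈ Finset.Icc 2 m, lam k / k ≤ Real.sqrt C := by
  rcases Nat.lt_or_ge m 2 with h | h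
  · rw [Finset.Icc_eq_empty (by omega)]
    simp [Real.sqrt_nonneg]
  have hC1 : (1:ℝ) ≤ C := by
    have := hsum 1
    simpa [hlam1] using this
  have hsq : (∑ k ∈ Finset.Icc 2 m, lam k / k) ^ 2 ≤ C := by
    have hcs := Finset.sum_mul_sq_le_sq_mul_sq (Finset.Icc 2 m) (fun k => lam k)
      (fun k => 1 / (k : ℝ))
    have h1 : ∑ k ∈ Finset.Icc 2 m, lam k * (1 / (k : ℝ)) =
        ∑ k ∈ Finset.Icc 2 m, lam k / k := by
      refine Finset.sum_congr rfl fun k _ => ?_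
      ring
    have h2 : ∑ k ∈ Finset.Icc 2 m, (lam k) ^ 2 ≤ C :=
      le_trans (Finset.sum_le_sum_of_subset_of_nonneg
        (Finset.Icc_subset_Icc (by omega) le_rfl) fun i _ _ => sq_nonneg _) (hsum m)
    have h3 : ∑ k ∈ Finset.Icc 2 m, (1 / (k : ℝ)) ^ 2 ≤ 1 := by
      refine le_trans (BW.sum_inv_sq_le m (by omega)) ?_
      have : (0:ℝ) ≤ 1 / m := by positivity
      linarith
    rw [h1] at hcs
    calc (∑ k ∈ Finset.Icc 2 m, lam k / k) ^ 2
        ≤ (∑ k ∈ Finset.Icc 2 m, (lam k) ^ 2) * ∑ k ∈ Finset.Icc 2 m, (1 / (k : ℝ)) ^ 2 := hcs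
      _ ≤ C * 1 :=
          mul_le_mul h2 h3 (Finset.sum_nonneg fun i _ => sq_nonneg _) (by linarith)
      _ = C := mul_one C
  have hnn : 0 ≤ ∑ k ∈ Finset.Icc 2 m, lam k / k :=
    Finset.sum_nonneg fun k hk =>
      div_nonneg (hlam_nonneg k (by have := (Finset.mem_Icc.mp hk).1; omega)) (Nat.cast_nonneg k)
  exact (Real.le_sqrt hnn (by linarith)).mpr hsq


lemma BW.prod_lower {C : ℝ} (hlam1 : lam 1 = 1)
    (hlam_nonneg : ∀ n, 1 ≤ n → 0 ≤ lam n)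
    (hmono : ∀ n, 2 ≤ n → lam n ≤ lam (n - 1))
    (hsum : ∀ n, ∑ i ∈ Finset.Icc 1 n, (lam i) ^ 2 ≤ C) (m : ℕ) :
    (Real.exp (2 * Real.sqrt C))⁻¹ ≤ ∏ k ∈ Finset.Icc 2 m, ((k : ℝ) - lam k) / k := by
  have hfact : ∀ k ∈ Finset.Icc 2 m, ((k : ℝ) - lam k) / k = 1 - lam k / k := by
    intro k hk
    have hk2 : 2 ≤ k := (Finset.mem_Icc.mp hk).1
    have hk0 : (k : ℝ) ≠ 0 := Nat.cast_ne_zero.mpr (by omega)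
    field_simp
  have hx0 : ∀ k ∈ Finset.Icc 2 m, 0 ≤ lam k / k := fun k hk =>
    div_nonneg (hlam_nonneg k (by have := (Finset.mem_Icc.mp hk).1; omega)) (Nat.cast_nonneg k)
  have hx2 : ∀ k ∈ Finset.Icc 2 m, lam k / k ≤ 1 / 2 := by
    intro k hk
    have hk2 : 2 ≤ k := (Finset.mem_Icc.mp hk).1
    have hk2' : (2:ℝ) ≤ k := by exact_mod_cast hk2
    have hl1 : lam k ≤ 1 := BW.lam_le_one hlam1 hmono k (by omega)
    exact div_le_div₀ (by norm_num) hl1 (by norm_num) hk2'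
  have step1 : ∏ k ∈ Finset.Icc 2 m, (1 + 2 * (lam k / k))⁻¹ ≤
      ∏ k ∈ Finset.Icc 2 m, ((k : ℝ) - lam k) / k := by
    refine Finset.prod_le_prod (fun k hk => by have := hx0 k hk; positivity) fun k hk => ?_
    rw [hfact k hk]
    have h0 := hx0 k hk
    have h2 := hx2 k hk
    rw [← one_div, div_le_iff₀ (by nlinarith)]
    nlinarith
  have step2 : ∏ k ∈ Finset.Icc 2 m, (1 + 2 * (lam k / k)) ≤ Real.exp (2 * Real.sqrt C) := by
    calc ∏ k ∈ Finset.Icc 2 m, (1 + 2 * (lam k / k))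
        ≤ ∏ k ∈ Finset.Icc 2 m, Real.exp (2 * (lam k / k)) := by
          refine Finset.prod_le_prod (fun k hk => by nlinarith [hx0 k hk]) fun k hk => ?_
          have := Real.add_one_le_exp (2 * (lam k / k))
          linarith
      _ = Real.exp (∑ k ∈ Finset.Icc 2 m, 2 * (lam k / k)) := (Real.exp_sum _ _).symm
      _ ≤ Real.exp (2 * Real.sqrt C) := by
          apply Real.exp_le_exp.mpr
          rw [← Finset.mul_sum]
          have := BW.sum_ratio_le hlam1 hlam_nonneg hsum m
          linarith
  calc (Real.exp (2 * Real.sqrt C))⁻¹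
      ≤ (∏ k ∈ Finset.Icc 2 m, (1 + 2 * (lam k / k)))⁻¹ := by
        apply inv_anti₀ ?_ step2
        refine Finset.prod_pos fun k hk => by nlinarith [hx0 k hk]
    _ = ∏ k ∈ Finset.Icc 2 m, (1 + 2 * (lam k / k))⁻¹ := by
        rw [Finset.prod_inv_distrib]
    _ ≤ _ := step1


lemma BW.moment_lower [IsProbabilityMeasure μ]
    (hmeas : ∀ n, Measurable (r n)) (hbin : ∀ n, 1 ≤ n → ∀ ω, r n ω = 0 ∨ r n ω = 1)
    (hfirst : ∫ ω, r 1 ω ∂μ = p)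
    (hcond : ∀ n, 2 ≤ n → μ[r n | ratingsAlg r (n - 1)] =ᵐ[μ]
      fun ω => lam n * p + (1 - lam n) * pbar r (n - 1) ω)
    (m : ℕ) (hm : 1 ≤ m) :
    p * (1 - p) * (∏ k ∈ Finset.Icc 2 m, ((k : ℝ) - lam k) / k) ^ 2 ≤
      ∫ ω, (pbar r m ω - p) ^ 2 ∂μ := by
  induction m, hm using Nat.le_induction with
  | base =>
    rw [Finset.Icc_eq_empty (by omega), Finset.prod_empty, one_pow, mul_one,
      BW.base hmeas hbin hfirst]
  | succ n hn ih =>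
    have hcndn : μ[r (n + 1) | ratingsAlg r n] =ᵐ[μ]
        fun ω => lam (n + 1) * p + (1 - lam (n + 1)) * pbar r n ω := by
      have := hcond (n + 1) (by omega)
      simpa using this
    have step := BW.moment_step hmeas hbin n hn hcndn
    rw [Finset.prod_Icc_succ_top (by omega : 2 ≤ n + 1)]
    have hcast : (((n + 1 : ℕ) : ℝ) - lam (n + 1)) / ((n + 1 : ℕ) : ℝ) =
        ((n : ℝ) + 1 - lam (n + 1)) / ((n : ℝ) + 1) := by push_cast; ring_nf
    rw [hcast]
    set a : ℝ := ((n : ℝ) + 1 - lam (n + 1)) / ((n : ℝ) + 1) with ha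
    set P : ℝ := ∏ k ∈ Finset.Icc 2 n, ((k : ℝ) - lam k) / k with hP
    calc p * (1 - p) * (P * a) ^ 2 = a ^ 2 * (p * (1 - p) * P ^ 2) := by ring
      _ ≤ a ^ 2 * ∫ ω, (pbar r n ω - p) ^ 2 ∂μ :=
          mul_le_mul_of_nonneg_left ih (sq_nonneg a)
      _ ≤ _ := step

end aux2

theorem bandwagon_inconsistency_of_sample_mean {Ω : Type*} [MeasurableSpace Ω] (μ : MeasureTheory.Measure Ω)
    (p : ℝ) (lam : ℕ → ℝ) (r : ℕ → Ω → ℝ)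
    (hbw : Bandwagon μ p lam r) (C : ℝ)
    (hsum : ∀ n, ∑ i ∈ Finset.Icc 1 n, (lam i) ^ 2 ≤ C) :
    ¬ (∀ ε : ℝ, 0 < ε →
        Filter.Tendsto (fun n : ℕ => μ {ω | ε < |pbar r n ω - p|})
          Filter.atTop (nhds 0)) := by
  obtain ⟨hprob, hp, hlam1, hlnn, hmono, hmeas, hbin, hfirst, hcond⟩ := hbw
  haveI := hprob
  intro H
  have hp0 : 0 < p := hp.1
  have hp1 : p < 1 := hp.2
  have h1p : 0 < 1 - p := by linarith
  set E : ℝ := (Real.exp (2 * Real.sqrt C))⁻¹ with hE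
  have hE0 : 0 < E := by positivity
  set δ : ℝ := p * (1 - p) * E ^ 2 with hδdef
  have hδ0 : 0 < δ := by positivity
  have hlow : ∀ m, 1 ≤ m → δ ≤ ∫ ω, (pbar r m ω - p) ^ 2 ∂μ := by
    intro m hm
    have h1 := BW.moment_lower hmeas hbin hfirst hcond m hm
    have h2 := BW.prod_lower hlam1 hlnn hmono hsum m
    have hEsq : E ^ 2 ≤ (∏ k ∈ Finset.Icc 2 m, ((k : ℝ) - lam k) / k) ^ 2 :=
      pow_le_pow_left₀ hE0.le h2 2
    have := mul_le_mul_of_nonneg_left hEsq (by positivity : (0:ℝ) ≤ p * (1 - p))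
    linarith
  set ε : ℝ := Real.sqrt (δ / 2) with hεdef
  have hε0 : 0 < ε := Real.sqrt_pos.mpr (by linarith)
  have hε2 : ε ^ 2 = δ / 2 := Real.sq_sqrt (by linarith)
  have hev : ∀ᶠ n in atTop, μ {ω | ε < |pbar r n ω - p|} < ENNReal.ofReal (δ / 4) :=
    (H ε hε0).eventually_lt_const (by simp [ENNReal.ofReal_pos]; linarith)
  obtain ⟨n, hn1, hnlt⟩ := ((eventually_ge_atTop 1).and hev).exists
  set bad : Set Ω := {ω | ε < |pbar r n ω - p|} with hbad
  have hbadmeas : MeasurableSet bad :=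
    measurableSet_lt measurable_const ((BW.pbar_meas hmeas n).sub measurable_const).abs
  have hDbd : ∀ ω, |pbar r n ω - p| ≤ 1 := fun ω =>
    abs_le.mpr ⟨by linarith [BW.pbar_nonneg hbin n ω], by linarith [BW.pbar_le_one hbin n ω]⟩
  have hptw : ∀ ω, (pbar r n ω - p) ^ 2 ≤ ε ^ 2 + bad.indicator (fun _ => (1:ℝ)) ω := by
    intro ω
    by_cases h : ω ∈ bad
    · rw [Set.indicator_of_mem h]
      have h1 : (pbar r n ω - p) ^ 2 ≤ 1 := (sq_le_one_iff_abs_le_one _).mpr (hDbd ω)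
      nlinarith [sq_nonneg ε]
    · rw [Set.indicator_of_notMem h]
      have h' : |pbar r n ω - p| ≤ ε := by
        simpa [hbad, not_lt] using h
      calc (pbar r n ω - p) ^ 2 = |pbar r n ω - p| ^ 2 := (sq_abs _).symm
        _ ≤ ε ^ 2 := pow_le_pow_left₀ (abs_nonneg _) h' 2
        _ ≤ ε ^ 2 + 0 := by linarith
        _ = ε ^ 2 + 0 := rfl
  have hintL : Integrable (fun ω => (pbar r n ω - p) ^ 2) μ := by
    refine BW.integrable_of_bound (((BW.pbar_meas hmeas n).sub measurable_const).pow_const 2)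
      1 fun ω => ?_
    rw [abs_pow]
    calc |pbar r n ω - p| ^ 2 ≤ 1 ^ 2 := pow_le_pow_left₀ (abs_nonneg _) (hDbd ω) 2
      _ = 1 := one_pow 2
  have hintInd : Integrable (bad.indicator fun _ => (1:ℝ)) μ :=
    (integrable_const 1).indicator hbadmeas
  have hub : ∫ ω, (pbar r n ω - p) ^ 2 ∂μ ≤ ε ^ 2 + (μ bad).toReal := by
    calc ∫ ω, (pbar r n ω - p) ^ 2 ∂μ
        ≤ ∫ ω, (ε ^ 2 + bad.indicator (fun _ => (1:ℝ)) ω) ∂μ :=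
          integral_mono hintL ((integrable_const _).add hintInd) hptw
      _ = ε ^ 2 + (μ bad).toReal := by
          rw [integral_add (integrable_const _) hintInd, integral_const]
          have hii : ∫ ω, bad.indicator (fun _ => (1:ℝ)) ω ∂μ = (μ bad).toReal :=
            integral_indicator_one hbadmeas
          simp [hii]
  have htr : (μ bad).toReal < δ / 4 := ENNReal.toReal_lt_of_lt_ofReal hnlt
  have := hlow n hn1
  linarith
end

section
/- If λ_i = c^{i-1} with c ∈ (0,1), the asymptotic expected absolute error of the sample mean under the bandwagon process is bounded below: lim_{n→∞} E[|p̄_n - p|] ≥ 2p(1-p) · exp( -c·Φ(c,1,2) - c²·Φ(c²,2,2) ), where Φ(z,s,a) = Σ_{k=0}^{∞} z^k/(a+k)^s is the Lerch transcendent. -/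
open MeasureTheory ProbabilityTheory Finset Filter

/-- Lerch transcendent `Φ(z,s,a) = Σ_k z^k/(a+k)^s`. -/
noncomputable def lerch (z : ℝ) (s a : ℕ) : ℝ := ∑' k : ℕ, z ^ k / ((a : ℝ) + k) ^ s


lemma exp_aux {x : ℝ} (h0 : 0 ≤ x) (h2 : x ≤ 1/2) :
    Real.exp (-(x + x^2)) ≤ 1 - x := by
  have hq := Real.quadratic_le_exp_of_nonneg (by positivity : (0:ℝ) ≤ x + x^2)
  have h1 : 1 ≤ Real.exp (x + x^2) * (1 - x) := by nlinarith
  have he : 0 < Real.exp (x + x^2) := Real.exp_pos _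
  rw [Real.exp_neg]
  rw [inv_le_iff_one_le_mul₀ he] at *
  nlinarith


lemma prod_aux {c : ℝ} (hc0 : 0 < c) (hc1 : c < 1) (n : ℕ) :
    Real.exp (-(c * lerch c 1 2) - c ^ 2 * lerch (c ^ 2) 2 2)
      ≤ ∏ i ∈ Icc 2 n, (1 - c ^ (i - 1) / i) := by
  set g : ℕ → ℝ := fun k => c ^ (k + 1) / (k + 2) with hg
  set h : ℕ → ℝ := fun k => (c ^ 2) ^ (k + 1) / ((k : ℝ) + 2) ^ 2 with hh
  have hcpow : ∀ k : ℕ, (0:ℝ) < c ^ k := fun k => pow_pos hc0 k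
  have hgs : Summable g := by
    apply Summable.of_nonneg_of_le (fun k => by positivity) (fun k => ?_)
      (summable_geometric_of_lt_one hc0.le hc1)
    · calc c ^ (k+1) / ((k:ℝ) + 2) ≤ c ^ (k+1) / 1 := by
            apply div_le_div_of_nonneg_left (hcpow _).le one_pos; linarith [Nat.cast_nonneg (α := ℝ) k]
        _ ≤ c ^ k := by rw [div_one, pow_succ]; nlinarith [hcpow k]
  have hhs : Summable h := by
    apply Summable.of_nonneg_of_le (fun k => by positivity) (fun k => ?_)
      (summable_geometric_of_lt_one (by positivity) (by nlinarith : c^2 < 1))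
    · have : ((k:ℝ)+2)^2 ≥ 1 := by nlinarith [Nat.cast_nonneg (α := ℝ) k]
      calc (c^2) ^ (k+1) / ((k:ℝ) + 2)^2 ≤ (c^2) ^ (k+1) / 1 := by
            apply div_le_div_of_nonneg_left (by positivity) one_pos; linarith
        _ ≤ (c^2) ^ k := by
            rw [div_one, pow_succ]
            exact mul_le_of_le_one_right (pow_nonneg (by positivity) k) (by nlinarith)
  have hlg : c * lerch c 1 2 = ∑' k, g k := by
    rw [lerch, ← tsum_mul_left]
    congr 1; funext k; simp [hg, pow_succ, pow_one]; ring
  have hlh : c ^ 2 * lerch (c ^ 2) 2 2 = ∑' k, h k := by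
    rw [lerch, ← tsum_mul_left]
    congr 1; funext k; simp [hh, pow_succ]; ring
  -- sum over Icc 2 n
  have key : ∑ i ∈ Icc 2 n, (c ^ (i-1) / i + (c ^ (i-1) / i)^2)
      ≤ c * lerch c 1 2 + c ^ 2 * lerch (c ^ 2) 2 2 := by
    rw [hlg, hlh]
    have hsplit : ∑ i ∈ Icc 2 n, (c ^ (i-1) / i + (c ^ (i-1) / i)^2)
        = ∑ k ∈ range (n + 1 - 2), (g k + h k) := by
      rw [← Finset.Ico_add_one_right_eq_Icc, Finset.sum_Ico_eq_sum_range]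
      apply Finset.sum_congr rfl
      intro k _
      simp only [hg, hh]
      have : (2 + k) - 1 = k + 1 := by omega
      rw [this]
      push_cast
      rw [div_pow, ← pow_mul]
      ring_nf
    rw [hsplit, Finset.sum_add_distrib]
    gcongr
    · exact Summable.sum_le_tsum _ (fun k _ => by positivity) hgs
    · exact Summable.sum_le_tsum _ (fun k _ => by positivity) hhs
  calc Real.exp (-(c * lerch c 1 2) - c ^ 2 * lerch (c ^ 2) 2 2)
      ≤ Real.exp (-∑ i ∈ Icc 2 n, (c ^ (i-1) / i + (c ^ (i-1) / i)^2)) := by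
        apply Real.exp_le_exp.2; linarith
    _ = ∏ i ∈ Icc 2 n, Real.exp (-(c ^ (i-1) / i + (c ^ (i-1) / i)^2)) := by
        rw [← Real.exp_sum, ← Finset.sum_neg_distrib]
    _ ≤ ∏ i ∈ Icc 2 n, (1 - c ^ (i-1) / i) := by
        apply Finset.prod_le_prod (fun i _ => (Real.exp_pos _).le)
        intro i hi
        have hi2 : 2 ≤ i := (Finset.mem_Icc.1 hi).1
        apply exp_aux (by positivity)
        have h1 : c ^ (i-1) ≤ 1 := pow_le_one₀ hc0.le hc1.le
        have h2 : (2:ℝ) ≤ i := by exact_mod_cast hi2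
        rw [div_le_iff₀ (by linarith)]; nlinarith

theorem key_identity {Ω : Type*} [MeasurableSpace Ω] (μ : Measure Ω)
    (p : ℝ) (lam : ℕ → ℝ) (r : ℕ → Ω → ℝ)
    (hbw : Bandwagon μ p lam r) :
    ∀ n, 1 ≤ n → ∫ ω, (pbar r n ω - p) * (2 * r 1 ω - 1) ∂μ
      = 2 * p * (1 - p) * ∏ i ∈ Finset.Icc 2 n, (1 - lam i / i) := by
  haveI := hbw.prob
  obtain ⟨hp0, hp1⟩ := hbw.hp
  set g : Ω → ℝ := fun ω => 2 * r 1 ω - 1 with hgdef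
  have hr01 : ∀ n, 1 ≤ n → ∀ ω, 0 ≤ r n ω ∧ r n ω ≤ 1 := by
    intro n hn ω; rcases hbw.hbin n hn ω with h | h <;> simp [h]
  have hg1 : ∀ ω, |g ω| ≤ 1 := by
    intro ω; rcases hbw.hbin 1 le_rfl ω with h | h <;> simp [hgdef, h] <;> norm_num
  have hgm : Measurable g := (measurable_const.mul (hbw.hmeas 1)).sub measurable_const
  have hpbarm : ∀ n, Measurable (pbar r n) := by
    intro n
    exact (Finset.measurable_sum _ fun i _ => hbw.hmeas i).div_const _
  have hpbar01 : ∀ n, 1 ≤ n → ∀ ω, 0 ≤ pbar r n ω ∧ pbar r n ω ≤ 1 := by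
    intro n hn ω
    have h1 : 0 ≤ ∑ i ∈ Finset.Icc 1 n, r i ω :=
      Finset.sum_nonneg fun i hi => (hr01 i (Finset.mem_Icc.1 hi).1 ω).1
    have h2 : ∑ i ∈ Finset.Icc 1 n, r i ω ≤ n := by
      calc ∑ i ∈ Finset.Icc 1 n, r i ω ≤ ∑ i ∈ Finset.Icc 1 n, 1 :=
            Finset.sum_le_sum fun i hi => (hr01 i (Finset.mem_Icc.1 hi).1 ω).2
        _ = n := by simp [Nat.card_Icc]
    have hn0 : (0:ℝ) < n := by exact_mod_cast hn
    constructor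
    · exact div_nonneg h1 hn0.le
    · show (∑ i ∈ Finset.Icc 1 n, r i ω) / (n:ℝ) ≤ 1
      rw [div_le_one hn0]; exact h2
  have hrint1 : Integrable (r 1) μ := by
    apply (integrable_const (1:ℝ)).mono' (hbw.hmeas 1).aestronglyMeasurable
    exact ae_of_all _ fun ω => by
      rcases hbw.hbin 1 le_rfl ω with h|h <;> simp [h]
  have int_bdd : ∀ (f : Ω → ℝ) (C : ℝ), Measurable f → (∀ ω, |f ω| ≤ C) → Integrable f μ := by
    intro f C hf hb
    exact (integrable_const C).mono' hf.aestronglyMeasurable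
      (ae_of_all _ fun ω => by simpa [Real.norm_eq_abs] using hb ω)
  have hmle : ∀ n, ratingsAlg r n ≤ (inferInstance : MeasurableSpace Ω) := by
    intro n
    exact iSup₂_le fun i _ => (hbw.hmeas i).comap_le
  have hgsm : ∀ n, 1 ≤ n → StronglyMeasurable[ratingsAlg r n] g := by
    intro n hn
    have h1 : MeasurableSpace.comap (r 1) (inferInstance : MeasurableSpace ℝ)
        ≤ ratingsAlg r n := by
      have := le_iSup₂ (f := fun (i : ℕ) (_ : i ∈ Finset.Icc 1 n) =>
        MeasurableSpace.comap (r i) (inferInstance : MeasurableSpace ℝ)) 1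
        (Finset.mem_Icc.mpr ⟨le_rfl, hn⟩)
      exact this
    have : Measurable[ratingsAlg r n] (r 1) :=
      (Measurable.of_comap_le le_rfl).mono h1 le_rfl
    exact ((measurable_const.mul this).sub measurable_const).stronglyMeasurable
  -- the conditional expectation step
  have key : ∀ n, 1 ≤ n → ∫ ω, g ω * r (n+1) ω ∂μ
      = ∫ ω, g ω * (lam (n+1) * p + (1 - lam (n+1)) * pbar r n ω) ∂μ := by
    intro n hn
    have hm := hmle n
    have hintr : Integrable (r (n+1)) μ :=
      int_bdd _ 1 (hbw.hmeas _) (fun ω => by rcases hbw.hbin (n+1) (by omega) ω with h|h <;> simp [h])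
    have hintgr : Integrable (fun ω => g ω * r (n+1) ω) μ := by
      apply int_bdd _ 1 (hgm.mul (hbw.hmeas _))
      intro ω
      rw [Pi.mul_apply, abs_mul]
      have := hg1 ω
      have := (hr01 (n+1) (by omega) ω)
      have : |r (n+1) ω| ≤ 1 := by rcases hbw.hbin (n+1) (by omega) ω with h|h <;> simp [h]
      nlinarith [abs_nonneg (g ω), abs_nonneg (r (n+1) ω), hg1 ω]
    have h1 : μ[(fun ω => g ω * r (n+1) ω) | ratingsAlg r n] =ᵐ[μ]
        fun ω => g ω * (μ[r (n+1) | ratingsAlg r n]) ω :=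
      condExp_mul_of_stronglyMeasurable_left (hgsm n hn) hintgr hintr
    have h2 := hbw.hcond (n+1) (by omega)
    simp only [Nat.add_sub_cancel] at h2
    calc ∫ ω, g ω * r (n+1) ω ∂μ
        = ∫ ω, (μ[(fun ω => g ω * r (n+1) ω) | ratingsAlg r n]) ω ∂μ :=
          (integral_condExp hm).symm
      _ = ∫ ω, g ω * (μ[r (n+1) | ratingsAlg r n]) ω ∂μ := integral_congr_ae h1
      _ = ∫ ω, g ω * (lam (n+1) * p + (1 - lam (n+1)) * pbar r n ω) ∂μ := by
          apply integral_congr_ae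
          filter_upwards [h2] with ω hω
          rw [hω]
  have prod_bdd : ∀ (a b A B : ℝ), |a| ≤ A → |b| ≤ B → |a*b| ≤ A*B := by
    intro a b A B ha hb
    rw [abs_mul]
    exact mul_le_mul ha hb (abs_nonneg _) ((abs_nonneg a).trans ha)
  have habs_r : ∀ n, 1 ≤ n → ∀ ω, |r n ω| ≤ 1 := by
    intro n hn ω; rcases hbw.hbin n hn ω with h|h <;> simp [h]
  have habs_pb : ∀ n, 1 ≤ n → ∀ ω, |pbar r n ω| ≤ 1 := by
    intro n hn ω
    rw [abs_le]; exact ⟨by linarith [(hpbar01 n hn ω).1], (hpbar01 n hn ω).2⟩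
  have hintg : Integrable g μ := int_bdd g 1 hgm hg1
  have i1 : ∀ n, 1 ≤ n → Integrable (fun ω => (pbar r n ω - p) * g ω) μ := by
    intro n hn
    apply int_bdd _ ((1 + |p|) * 1) (((hpbarm n).sub measurable_const).mul hgm)
    intro ω
    apply prod_bdd _ _ _ _ _ (hg1 ω)
    calc |pbar r n ω - p| ≤ |pbar r n ω| + |p| := abs_sub _ _
      _ ≤ 1 + |p| := by linarith [habs_pb n hn ω]
  have i2 : ∀ n, 1 ≤ n → Integrable (fun ω => g ω * r n ω) μ := by
    intro n hn
    apply int_bdd _ (1 * 1) (hgm.mul (hbw.hmeas n))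
    intro ω; exact prod_bdd _ _ _ _ (hg1 ω) (habs_r n hn ω)
  have i2pb : ∀ n, 1 ≤ n → Integrable (fun ω => g ω * pbar r n ω) μ := by
    intro n hn
    apply int_bdd _ (1 * 1) (hgm.mul (hpbarm n))
    intro ω; exact prod_bdd _ _ _ _ (hg1 ω) (habs_pb n hn ω)
  intro n hn
  induction n, hn using Nat.le_induction with
  | base =>
    have hpt : ∀ ω, (pbar r 1 ω - p) * g ω = (1 - 2*p) * r 1 ω + p := by
      intro ω
      have hpb1 : pbar r 1 ω = r 1 ω := by simp [pbar]
      rw [hpb1]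
      rcases hbw.hbin 1 le_rfl ω with h|h <;> rw [hgdef] <;> simp [h] <;> ring
    rw [integral_congr_ae (ae_of_all _ hpt),
      integral_add ((hrint1 : Integrable (r 1) μ).const_mul _) (integrable_const p),
      integral_const_mul, hbw.hfirst, integral_const]
    have : Finset.Icc 2 1 = (∅ : Finset ℕ) := by
      apply Finset.Icc_eq_empty; omega
    rw [this]
    simp [measure_univ]
    ring
  | succ n hn IH =>
    have hnR : (0:ℝ) < n := by exact_mod_cast hn
    have hsplit : ∀ ω, (pbar r (n+1) ω - p) * g ω
        = ((n:ℝ)/((n:ℝ)+1)) * ((pbar r n ω - p) * g ω)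
          + (1/((n:ℝ)+1)) * (g ω * r (n+1) ω - p * g ω) := by
      intro ω
      have hs : pbar r (n+1) ω = ((n:ℝ) * pbar r n ω + r (n+1) ω) / ((n:ℝ)+1) := by
        simp only [pbar]
        rw [Finset.sum_Icc_succ_top (by omega : 1 ≤ n+1)]
        push_cast
        field_simp
      rw [hs]; field_simp; ring
    have i3 : Integrable (fun ω => p * g ω) μ := hintg.const_mul p
    have icond : Integrable
        (fun ω => g ω * (lam (n+1) * p + (1 - lam (n+1)) * pbar r n ω)) μ := by
      have : Integrable (fun ω => (lam (n+1) * p) * g ω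
          + (1 - lam (n+1)) * (g ω * pbar r n ω)) μ :=
        (hintg.const_mul _).add ((i2pb n hn).const_mul _)
      exact this.congr (ae_of_all _ fun ω => by ring)
    have i4 : Integrable (fun ω => g ω * r (n+1) ω - p * g ω) μ :=
      (i2 (n+1) (by omega)).sub i3
    rw [integral_congr_ae (ae_of_all _ hsplit),
      integral_add ((i1 n hn).const_mul _) (i4.const_mul _),
      integral_const_mul, integral_const_mul,
      integral_sub (i2 (n+1) (by omega)) i3,
      key n hn]
    have e2 : ∫ ω, g ω * (lam (n+1) * p + (1 - lam (n+1)) * pbar r n ω) ∂μ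
        - ∫ ω, p * g ω ∂μ
        = (1 - lam (n+1)) * ∫ ω, (pbar r n ω - p) * g ω ∂μ := by
      rw [← integral_sub icond i3, ← integral_const_mul]
      apply integral_congr_ae (ae_of_all _ fun ω => ?_)
      ring
    rw [e2, IH, Finset.prod_Icc_succ_top (by omega : 2 ≤ n+1)]
    have hcast : ((n:ℝ)+1) ≠ 0 := by linarith
    push_cast
    field_simp
    ring


theorem bandwagon_geometric_lambda_error_bound {Ω : Type*} [MeasurableSpace Ω] (μ : MeasureTheory.Measure Ω)
    (p : ℝ) (lam : ℕ → ℝ) (r : ℕ → Ω → ℝ)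
    (hbw : Bandwagon μ p lam r) (c : ℝ)
    (hc : 0 < c ∧ c < 1) (hlam : ∀ i, 1 ≤ i → lam i = c ^ (i - 1)) :
    2 * p * (1 - p) * Real.exp (-(c * lerch c 1 2) - c ^ 2 * lerch (c ^ 2) 2 2)
      ≤ Filter.liminf (fun n : ℕ => ∫ ω, |pbar r n ω - p| ∂μ) Filter.atTop := by
  obtain ⟨hc0, hc1⟩ := hc
  haveI := hbw.prob
  obtain ⟨hp0, hp1⟩ := hbw.hp
  have hr01 : ∀ n, 1 ≤ n → ∀ ω, 0 ≤ r n ω ∧ r n ω ≤ 1 := by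
    intro n hn ω; rcases hbw.hbin n hn ω with h | h <;> simp [h]
  have hpbarm : ∀ n, Measurable (pbar r n) := by
    intro n
    exact (Finset.measurable_sum _ fun i _ => hbw.hmeas i).div_const _
  have hpbar01 : ∀ n, 1 ≤ n → ∀ ω, 0 ≤ pbar r n ω ∧ pbar r n ω ≤ 1 := by
    intro n hn ω
    have h1 : 0 ≤ ∑ i ∈ Finset.Icc 1 n, r i ω :=
      Finset.sum_nonneg fun i hi => (hr01 i (Finset.mem_Icc.1 hi).1 ω).1
    have h2 : ∑ i ∈ Finset.Icc 1 n, r i ω ≤ n := by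
      calc ∑ i ∈ Finset.Icc 1 n, r i ω ≤ ∑ i ∈ Finset.Icc 1 n, 1 :=
            Finset.sum_le_sum fun i hi => (hr01 i (Finset.mem_Icc.1 hi).1 ω).2
        _ = n := by simp [Nat.card_Icc]
    have hn0 : (0:ℝ) < n := by exact_mod_cast hn
    constructor
    · exact div_nonneg h1 hn0.le
    · show (∑ i ∈ Finset.Icc 1 n, r i ω) / (n:ℝ) ≤ 1
      rw [div_le_one hn0]; exact h2
  have hgm : Measurable (fun ω => 2 * r 1 ω - 1) :=
    (measurable_const.mul (hbw.hmeas 1)).sub measurable_const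
  have hg1 : ∀ ω, |2 * r 1 ω - 1| ≤ 1 := by
    intro ω; rcases hbw.hbin 1 le_rfl ω with h | h <;> simp [h] <;> norm_num
  have int_bdd : ∀ (f : Ω → ℝ) (C : ℝ), Measurable f → (∀ ω, |f ω| ≤ C) → Integrable f μ := by
    intro f C hf hb
    exact (integrable_const C).mono' hf.aestronglyMeasurable
      (ae_of_all _ fun ω => by simpa [Real.norm_eq_abs] using hb ω)
  have habs : ∀ n, 1 ≤ n → ∀ ω, |pbar r n ω - p| ≤ 2 := by
    intro n hn ω
    have := hpbar01 n hn ω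
    rw [abs_le]; constructor <;> nlinarith [this.1, this.2]
  have iabs : ∀ n, 1 ≤ n → Integrable (fun ω => |pbar r n ω - p|) μ := by
    intro n hn
    exact int_bdd _ 2 ((hpbarm n).sub measurable_const).abs
      (fun ω => by rw [abs_abs]; exact habs n hn ω)
  have i1 : ∀ n, 1 ≤ n →
      Integrable (fun ω => (pbar r n ω - p) * (2 * r 1 ω - 1)) μ := by
    intro n hn
    apply int_bdd _ (2*1) (((hpbarm n).sub measurable_const).mul hgm)
    intro ω
    rw [Pi.mul_apply, abs_mul]
    exact mul_le_mul (habs n hn ω) (hg1 ω) (abs_nonneg _) (by norm_num)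
  have low : ∀ n : ℕ, 1 ≤ n →
      2 * p * (1 - p) * ∏ i ∈ Finset.Icc 2 n, (1 - c ^ (i-1) / i)
        ≤ ∫ ω, |pbar r n ω - p| ∂μ := by
    intro n hn
    have hprod : ∏ i ∈ Finset.Icc 2 n, (1 - lam i / i)
        = ∏ i ∈ Finset.Icc 2 n, (1 - c ^ (i-1) / i) :=
      Finset.prod_congr rfl fun i hi => by
        rw [hlam i (le_trans one_le_two (Finset.mem_Icc.1 hi).1)]
    rw [← hprod, ← key_identity μ p lam r hbw n hn]
    apply integral_mono (i1 n hn) (iabs n hn)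
    intro ω
    calc (pbar r n ω - p) * (2 * r 1 ω - 1)
        ≤ |(pbar r n ω - p) * (2 * r 1 ω - 1)| := le_abs_self _
      _ = |pbar r n ω - p| * |2 * r 1 ω - 1| := abs_mul _ _
      _ ≤ |pbar r n ω - p| * 1 := mul_le_mul_of_nonneg_left (hg1 ω) (abs_nonneg _)
      _ = |pbar r n ω - p| := mul_one _
  have h2p : (0:ℝ) ≤ 2 * p * (1 - p) := by nlinarith
  apply le_liminf_of_le
  · apply isCoboundedUnder_ge_of_eventually_le Filter.atTop (x := (2:ℝ))
    refine eventually_atTop.2 ⟨1, fun n hn => ?_⟩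
    calc ∫ ω, |pbar r n ω - p| ∂μ ≤ ∫ _ω, (2:ℝ) ∂μ :=
          integral_mono (iabs n hn) (integrable_const 2) (fun ω => habs n hn ω)
      _ = 2 := by simp [measure_univ]
  · refine eventually_atTop.2 ⟨1, fun n hn => le_trans ?_ (low n hn)⟩
    exact mul_le_mul_of_nonneg_left (prod_aux hc0 hc1 n) h2p
end

section
/- When λ̂_i = λ_i for all i (with λ_i > 0), distinct affine corrected ratings are uncorrelated: for j < i, E[r̂_i r̂_j] = E[r̂_i] E[r̂_j] = p². -/
open MeasureTheory ProbabilityTheory Finset Filter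

theorem affine_uncorrelated {Ω : Type*} [MeasurableSpace Ω] (μ : MeasureTheory.Measure Ω)
    (p : ℝ) (lam : ℕ → ℝ) (r : ℕ → Ω → ℝ)
    (hbw : Bandwagon μ p lam r)
    (hpos : ∀ i, 1 ≤ i → 0 < lam i) :
    ∀ j i, 1 ≤ j → j < i →
      (∫ ω, rhat r lam i ω * rhat r lam j ω ∂μ
          = (∫ ω, rhat r lam i ω ∂μ) * (∫ ω, rhat r lam j ω ∂μ)) ∧
      (∫ ω, rhat r lam i ω * rhat r lam j ω ∂μ = p ^ 2) := by

  obtain ⟨hprob, ⟨hp0, hp1⟩, hlam1, hlamnn, hlammono, hmeas, hbin, hfirst, hcond⟩ := hbw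
  haveI := hprob
  have hle : ∀ n, ratingsAlg r n ≤ ‹MeasurableSpace Ω› := fun n =>
    iSup₂_le fun i _ => (hmeas i).comap_le
  have hmr : ∀ n k, k ∈ Finset.Icc 1 n → Measurable[ratingsAlg r n] (r k) := fun n k hk =>
    Measurable.of_comap_le (le_biSup (fun i => MeasurableSpace.comap (r i) inferInstance) hk)
  have hmpbar : ∀ n k, k ≤ n → Measurable[ratingsAlg r n] (pbar r k) := by
    intro n k hk
    unfold pbar
    exact (Finset.measurable_sum _ fun i hi => hmr n i (Finset.mem_Icc.mpr
      ⟨(Finset.mem_Icc.mp hi).1, le_trans (Finset.mem_Icc.mp hi).2 hk⟩)).div_const _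
  have hmrhat : ∀ n j, 1 ≤ j → j ≤ n → Measurable[ratingsAlg r n] (rhat r lam j) := by
    intro n j h1 h2
    unfold rhat
    exact ((hmr n j (Finset.mem_Icc.mpr ⟨h1, h2⟩)).sub
      ((hmpbar n (j-1) (le_trans (Nat.sub_le j 1) h2)).const_mul _)).div_const _
  have hr01 : ∀ n, 1 ≤ n → ∀ ω, 0 ≤ r n ω ∧ r n ω ≤ 1 := by
    intro n hn ω; rcases hbin n hn ω with h | h <;> simp [h]
  have hpbar01 : ∀ n ω, 0 ≤ pbar r n ω ∧ pbar r n ω ≤ 1 := by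
    intro n ω
    have h0 : 0 ≤ ∑ i ∈ Finset.Icc 1 n, r i ω :=
      Finset.sum_nonneg fun i hi => (hr01 i (Finset.mem_Icc.mp hi).1 ω).1
    have h1 : ∑ i ∈ Finset.Icc 1 n, r i ω ≤ (n : ℝ) := by
      calc ∑ i ∈ Finset.Icc 1 n, r i ω ≤ ∑ _i ∈ Finset.Icc 1 n, (1:ℝ) :=
            Finset.sum_le_sum fun i hi => (hr01 i (Finset.mem_Icc.mp hi).1 ω).2
        _ = (n : ℝ) := by simp [Nat.card_Icc]
    exact ⟨div_nonneg h0 (Nat.cast_nonneg n), div_le_one_of_le₀ h1 (Nat.cast_nonneg n)⟩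
  have hlamle1 : ∀ n, 1 ≤ n → lam n ≤ 1 := by
    intro n hn
    induction n with
    | zero => omega
    | succ k ih =>
      rcases Nat.lt_or_ge k 1 with h | h
      · have hk : k = 0 := by omega
        subst hk; simp [hlam1]
      · have h2 : 2 ≤ k + 1 := by omega
        have hmono := hlammono (k+1) h2
        simp only [Nat.add_sub_cancel] at hmono
        exact le_trans hmono (ih h)
  have hint : ∀ (f : Ω → ℝ), Measurable f → ∀ C : ℝ, (∀ ω, |f ω| ≤ C) → Integrable f μ := by
    intro f hf C hC
    exact (integrable_const C).mono' hf.aestronglyMeasurable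
      (Filter.Eventually.of_forall fun ω => by simpa [Real.norm_eq_abs] using hC ω)
  have hintr : ∀ n, 1 ≤ n → Integrable (r n) μ := fun n hn =>
    hint _ (hmeas n) 1 (fun ω => abs_le.mpr ⟨by linarith [(hr01 n hn ω).1], (hr01 n hn ω).2⟩)
  have hintpbar : ∀ n, Integrable (pbar r n) μ := fun n =>
    hint _ ((hmpbar n n le_rfl).mono (hle n) le_rfl) 1
      (fun ω => abs_le.mpr ⟨by linarith [(hpbar01 n ω).1], (hpbar01 n ω).2⟩)
  have hrhatbound : ∀ n, 1 ≤ n → ∀ ω, |rhat r lam n ω| ≤ 2 / lam n := by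
    intro n hn ω
    have hlp := hpos n hn
    have h1 : |r n ω - (1 - lam n) * pbar r (n-1) ω| ≤ 2 := by
      have hr := hr01 n hn ω
      have hpb := hpbar01 (n-1) ω
      have hl1 := hlamle1 n hn
      rw [abs_le]
      constructor <;> nlinarith [hpb.1, hpb.2, hr.1, hr.2]
    unfold rhat
    rw [abs_div, abs_of_pos hlp]
    gcongr
  have hintrhat : ∀ n, 1 ≤ n → Integrable (rhat r lam n) μ := fun n hn =>
    hint _ ((hmrhat n n hn le_rfl).mono (hle n) le_rfl) _ (hrhatbound n hn)
  have hmean : ∀ j, 1 ≤ j → ∫ ω, rhat r lam j ω ∂μ = p := by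
    intro j hj
    rcases Nat.lt_or_ge j 2 with h | h
    · have hj1 : j = 1 := by omega
      subst hj1
      have he : rhat r lam 1 = r 1 := by
        funext ω; simp [rhat, hlam1]
      rw [he, hfirst]
    · have hlp := hpos j hj
      have hEr : ∫ ω, r j ω ∂μ = lam j * p + (1 - lam j) * ∫ ω, pbar r (j-1) ω ∂μ := by
        rw [← integral_condExp (hle (j-1)) (f := r j), integral_congr_ae (hcond j h)]
        rw [integral_add (integrable_const _) ((hintpbar (j-1)).const_mul _),
          integral_const, integral_const_mul _ _]
        simp
      have hsplit : ∫ ω, rhat r lam j ω ∂μ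
          = ((∫ ω, r j ω ∂μ) - (1 - lam j) * ∫ ω, pbar r (j-1) ω ∂μ) / lam j := by
        unfold rhat
        rw [integral_div, integral_sub (hintr j hj) ((hintpbar (j-1)).const_mul _),
          integral_const_mul _ _]
      rw [hsplit, hEr, add_sub_cancel_right, mul_div_cancel_left₀ _ hlp.ne']
  intro j i hj hji
  have hi2 : 2 ≤ i := by omega
  have hi1 : 1 ≤ i := by omega
  have hji1 : j ≤ i - 1 := by omega
  have hmle := hle (i-1)
  have hgj : Measurable[ratingsAlg r (i-1)] (rhat r lam j) := hmrhat (i-1) j hj hji1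
  have hpbabs : ∀ ω, |pbar r (i-1) ω| ≤ 1 := fun ω =>
    abs_le.mpr ⟨by linarith [(hpbar01 (i-1) ω).1], (hpbar01 (i-1) ω).2⟩
  have hprod : Integrable (fun ω => rhat r lam j ω * pbar r (i-1) ω) μ := by
    refine hint _ ((hgj.mono hmle le_rfl).mul ((hmpbar (i-1) (i-1) le_rfl).mono hmle le_rfl))
      (2 / lam j) fun ω => ?_
    rw [abs_mul]
    calc |rhat r lam j ω| * |pbar r (i-1) ω| ≤ (2 / lam j) * 1 :=
          mul_le_mul (hrhatbound j hj ω) (hpbabs ω) (abs_nonneg _)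
            (div_nonneg (by norm_num) (hpos j hj).le)
      _ = 2 / lam j := mul_one _
  have hprod2 : Integrable (fun ω => rhat r lam j ω * r i ω) μ := by
    refine hint _ ((hgj.mono hmle le_rfl).mul (hmeas i)) (2 / lam j) fun ω => ?_
    rw [abs_mul]
    calc |rhat r lam j ω| * |r i ω| ≤ (2 / lam j) * 1 :=
          mul_le_mul (hrhatbound j hj ω)
            (abs_le.mpr ⟨by linarith [(hr01 i hi1 ω).1], (hr01 i hi1 ω).2⟩) (abs_nonneg _)
            (div_nonneg (by norm_num) (hpos j hj).le)
      _ = 2 / lam j := mul_one _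
  have key : ∫ ω, rhat r lam j ω * r i ω ∂μ
      = ∫ ω, rhat r lam j ω * (lam i * p + (1 - lam i) * pbar r (i-1) ω) ∂μ := by
    have h1 : μ[(fun ω => rhat r lam j ω * r i ω) | ratingsAlg r (i-1)] =ᵐ[μ]
        fun ω => rhat r lam j ω * (μ[r i | ratingsAlg r (i-1)]) ω :=
      condExp_stronglyMeasurable_mul_of_bound hmle hgj.stronglyMeasurable (hintr i hi1)
        (2 / lam j) (Filter.Eventually.of_forall fun ω => by
          simpa [Real.norm_eq_abs] using hrhatbound j hj ω)
    calc ∫ ω, rhat r lam j ω * r i ω ∂μ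
        = ∫ ω, (μ[(fun ω => rhat r lam j ω * r i ω) | ratingsAlg r (i-1)]) ω ∂μ :=
          (integral_condExp hmle).symm
      _ = ∫ ω, rhat r lam j ω * (μ[r i | ratingsAlg r (i-1)]) ω ∂μ := integral_congr_ae h1
      _ = ∫ ω, rhat r lam j ω * (lam i * p + (1 - lam i) * pbar r (i-1) ω) ∂μ := by
          refine integral_congr_ae ?_
          filter_upwards [hcond i hi2] with ω hω
          rw [hω]
  have expand : ∫ ω, rhat r lam j ω * (lam i * p + (1 - lam i) * pbar r (i-1) ω) ∂μ
      = lam i * p * (∫ ω, rhat r lam j ω ∂μ)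
        + (1 - lam i) * ∫ ω, rhat r lam j ω * pbar r (i-1) ω ∂μ := by
    have hre : ∀ ω, rhat r lam j ω * (lam i * p + (1 - lam i) * pbar r (i-1) ω)
        = lam i * p * rhat r lam j ω
          + (1 - lam i) * (rhat r lam j ω * pbar r (i-1) ω) := fun ω => by ring
    simp_rw [hre]
    rw [integral_add ((hintrhat j hj).const_mul _) (hprod.const_mul _),
      integral_const_mul _ _, integral_const_mul _ _]
  have hlpi := hpos i hi1
  have hmain : ∫ ω, rhat r lam i ω * rhat r lam j ω ∂μ = p ^ 2 := by
    have hre : ∀ ω, rhat r lam i ω * rhat r lam j ω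
        = (rhat r lam j ω * r i ω - (1 - lam i) * (rhat r lam j ω * pbar r (i-1) ω)) / lam i := by
      intro ω
      rw [show rhat r lam i ω = (r i ω - (1 - lam i) * pbar r (i-1) ω) / lam i from rfl,
        div_mul_eq_mul_div]
      congr 1
      ring
    simp_rw [hre]
    rw [integral_div, integral_sub hprod2 (hprod.const_mul _), integral_const_mul _ _,
      key, expand, hmean j hj]
    field_simp
    ring
  refine ⟨?_, hmain⟩
  rw [hmain, hmean i hi1, hmean j hj]
  ring
end
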